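/- Let p ≥ 1 be an integer, let e_p be a primitive p-th root of unity in ℂ, let t ≥ 1 be an integer and let m be a natural number with 0 ≤ m ≤ p−1. Then for every x ∈ ℂ: (1 − x^{2p}) · Σ_{p+m = k_t ≥ k_{t−1} ≥ … ≥ k_1 ≥ 0} ∏_{i=1}^{t−1} e_p^{k_i(k_i+1)} x^{2k_i} [k_{i+1} choose k_i]_{e_p} = (1 − x^{2tp}) · Σ_{m = k_t ≥ k_{t−1} ≥ … ≥ k_1 ≥ 0} ∏_{i=1}^{t−1} e_p^{k_i(k_i+1)} x^{2k_i} [k_{i+1} choose k_i]_{e_p}, where both sums are over integer sequences with the indicated fixed top entry k_t. -/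

import Mathlib

/-- Evaluation at `ζ : ℂ` of the Gaussian binomial coefficient `[n choose k]_q ∈ ℤ[q]`,
defined by the `q`-Pascal recursion, agreeing with
`∏_{i=1}^{k} (1−q^{n−k+i})/(1−q^i)` for `k ≤ n` and with `0` for `k > n`. -/
def qbinom : ℕ → ℕ → ℂ → ℂ
  | _, 0, _ => 1
  | 0, _ + 1, _ => 0
  | n + 1, k + 1, ζ => qbinom n k ζ + ζ ^ (k + 1) * qbinom n (k + 1) ζ

/-- The weighted chain sum: the sum over integer sequences
`top = k_{t+1} ≥ k_t ≥ … ≥ k_1 ≥ 0` of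
`∏_{i=1}^{t} e^{k_i(k_i+1)} x^{2k_i} [k_{i+1} choose k_i]_e`,
where a chain is encoded as a monotone function `f : Fin (t+1) → Fin (top+1)`
with top value `top` (so `f i = k_{i+1}`). -/
noncomputable def chainW (t top : ℕ) (x e : ℂ) : ℂ :=
  ∑ f ∈ Finset.univ.filter
      (fun f : Fin (t + 1) → Fin (top + 1) => Monotone f ∧ f (Fin.last t) = Fin.last top),
    ∏ i : Fin t,
      e ^ ((f i.castSucc : ℕ) * ((f i.castSucc : ℕ) + 1)) * x ^ (2 * (f i.castSucc : ℕ)) *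
        qbinom (f i.succ : ℕ) (f i.castSucc : ℕ) e

lemma qbinom_zero_right (n : ℕ) (ζ : ℂ) : qbinom n 0 ζ = 1 := by cases n <;> rfl

lemma qbinom_succ_succ (n k : ℕ) (ζ : ℂ) :
    qbinom (n+1) (k+1) ζ = qbinom n k ζ + ζ ^ (k + 1) * qbinom n (k + 1) ζ := rfl

lemma qbinom_eq_zero_of_lt : ∀ {n k : ℕ}, n < k → ∀ ζ : ℂ, qbinom n k ζ = 0 := by
  intro n
  induction n with
  | zero => intro k hk ζ; cases k with
    | zero => omega
    | succ k => rfl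
  | succ n ih =>
    intro k hk ζ
    cases k with
    | zero => omega
    | succ k =>
      rw [qbinom_succ_succ, ih (by omega) ζ, ih (by omega) ζ]; ring

lemma qbinom_self : ∀ (n : ℕ) (ζ : ℂ), qbinom n n ζ = 1 := by
  intro n
  induction n with
  | zero => intro ζ; rfl
  | succ n ih =>
    intro ζ
    rw [qbinom_succ_succ, ih ζ, qbinom_eq_zero_of_lt (by omega) ζ]; ring

lemma qbinom_prod_formula : ∀ (n k : ℕ), k ≤ n → ∀ ζ : ℂ,
    (∏ i ∈ Finset.range k, (1 - ζ^(i+1))) * qbinom n k ζ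
      = ∏ i ∈ Finset.range k, (1 - ζ^(n-k+i+1)) := by
  intro n
  induction n with
  | zero => intro k hk ζ; interval_cases k; simp [qbinom_zero_right]
  | succ n ih =>
    intro k hk ζ
    cases k with
    | zero => simp [qbinom_zero_right]
    | succ k =>
      rcases eq_or_lt_of_le hk with h | h
      · have hk' : k = n := by omega
        subst hk'
        rw [qbinom_self]
        simp
      · obtain ⟨j, rfl⟩ : ∃ j, n = k + 1 + j := ⟨n - (k+1), by omega⟩
        rw [qbinom_succ_succ, Finset.prod_range_succ, Finset.prod_range_succ]
        have h1 := ih k (by omega) ζ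
        have h2 := ih (k+1) (by omega) ζ
        have E0 : ∀ x : ℕ, k + 1 + j - k + x = j + 1 + x := fun x => by omega
        have E1 : ∀ x : ℕ, k + 1 + j + 1 - (k + 1) + x = j + 1 + x := fun x => by omega
        have E2 : ∀ x : ℕ, k + 1 + j - (k + 1) + x = j + x := fun x => by omega
        simp only [E0] at h1
        simp only [E2] at h2
        rw [Finset.prod_range_succ, Finset.prod_range_succ'] at h2
        simp only [E1, Nat.add_zero]
        -- h2 : D_{k+1} * B = (∏ x ∈ range k, (1-ζ^(j+(x+1)+1))) * (1-ζ^(j+0+1))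
        have E3 : ∀ x : ℕ, j + (x+1) + 1 = j + 1 + x + 1 := fun x => by omega
        simp only [E3, Nat.zero_add] at h2
        linear_combination (1 - ζ^(k+1)) * h1 + ζ^(k+1) * h2

lemma qbinom_prim_root_zero {p : ℕ} {e : ℂ} (he : IsPrimitiveRoot e p)
    {k : ℕ} (h0 : 0 < k) (h1 : k < p) : qbinom p k e = 0 := by
  have hf := qbinom_prod_formula p k (le_of_lt h1) e
  have hrhs : ∏ i ∈ Finset.range k, (1 - e^(p-k+i+1)) = 0 := by
    apply Finset.prod_eq_zero (Finset.mem_range.mpr (Nat.sub_lt h0 Nat.one_pos))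
    have : p - k + (k - 1) + 1 = p := by omega
    rw [this, he.pow_eq_one]
    ring
  have hD : (∏ i ∈ Finset.range k, (1 - e^(i+1))) ≠ 0 := by
    rw [Finset.prod_ne_zero_iff]
    intro i hi
    have hi' : i + 1 < p := by have := Finset.mem_range.mp hi; omega
    have := he.pow_ne_one_of_pos_of_lt (Nat.succ_ne_zero i) hi'
    intro hc
    apply this
    have : e ^ (i+1) = 1 := by linear_combination -hc
    exact this
  rcases mul_eq_zero.mp (hf.trans hrhs) with h | h
  · exact absurd h hD
  · exact h

lemma qbinom_lucas {p : ℕ} (hp : 1 ≤ p) {e : ℂ} (he : IsPrimitiveRoot e p) :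
    ∀ m, m + 1 ≤ p → ∀ k,
      qbinom (p+m) k e = qbinom m k e + (if p ≤ k then qbinom m (k-p) e else 0) := by
  have hep : e ^ p = 1 := he.pow_eq_one
  intro m
  induction m with
  | zero =>
    intro _ k
    simp only [Nat.add_zero]
    rcases Nat.lt_trichotomy k p with h | h | h
    · rcases Nat.eq_zero_or_pos k with rfl | hk0
      · simp [qbinom_zero_right, Nat.not_le.mpr hp]
      · rw [qbinom_prim_root_zero he hk0 h, if_neg (by omega),
          qbinom_eq_zero_of_lt hk0 e]
        ring
    · subst h
      rw [qbinom_self, if_pos le_rfl, Nat.sub_self, qbinom_zero_right,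
        qbinom_eq_zero_of_lt hp e]
      ring
    · rw [qbinom_eq_zero_of_lt (by omega) e, if_pos (le_of_lt h),
        qbinom_eq_zero_of_lt (by omega) e, qbinom_eq_zero_of_lt (by omega) e]
      ring
  | succ m ih =>
    intro hm k
    cases k with
    | zero => simp [qbinom_zero_right, Nat.not_le.mpr hp]
    | succ k =>
      have hpas : qbinom (p + (m+1)) (k+1) e
          = qbinom (p+m) k e + e^(k+1) * qbinom (p+m) (k+1) e := by
        have : p + (m+1) = (p+m) + 1 := by omega
        rw [this, qbinom_succ_succ]
      rw [hpas, ih (by omega) k, ih (by omega) (k+1)]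
      rcases Nat.lt_trichotomy (k+1) p with h | h | h
      · rw [if_neg (by omega), if_neg (by omega), if_neg (by omega), qbinom_succ_succ]
        ring
      · rw [if_neg (by omega), if_pos (by omega), ← h, Nat.sub_self,
          qbinom_zero_right, qbinom_zero_right, qbinom_succ_succ, h, hep]
        rw [if_pos (le_refl p)]
        ring
      · obtain ⟨j, rfl⟩ : ∃ j, k = p + j := ⟨k - p, by omega⟩
        rw [if_pos (by omega), if_pos (by omega), if_pos (by omega)]
        have e1 : p + j - p = j := by omega
        have e2 : p + j + 1 - p = j + 1 := by omega
        rw [e1, e2, qbinom_succ_succ, qbinom_succ_succ]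
        have e3 : e ^ (p + j + 1) = e ^ (j + 1) := by
          rw [pow_add, pow_add, hep]; ring
        rw [e3]
        ring

lemma chainW_zero (top : ℕ) (x e : ℂ) : chainW 0 top x e = 1 := by
  classical
  unfold chainW
  have hset : (Finset.univ.filter
      (fun f : Fin 1 → Fin (top + 1) => Monotone f ∧ f (Fin.last 0) = Fin.last top))
      = {fun _ => Fin.last top} := by
    ext f
    simp only [Finset.mem_filter, Finset.mem_univ, true_and, Finset.mem_singleton]
    constructor
    · rintro ⟨-, h2⟩
      funext i
      have : i = Fin.last 0 := Subsingleton.elim _ _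
      rw [this, h2]
    · rintro rfl
      exact ⟨monotone_const, rfl⟩
  rw [hset]
  simp

/-- lift a chain `g` with top `k` to a chain with top `top` by appending `top`. -/
def liftF {s top : ℕ} (k : Fin (top+1)) (g : Fin (s+1) → Fin ((k:ℕ)+1)) :
    Fin (s+2) → Fin (top+1) :=
  Fin.snoc (fun i => Fin.castLE k.isLt (g i)) (Fin.last top)

def resF {s top : ℕ} (k : Fin (top+1)) (f : Fin (s+2) → Fin (top+1)) :
    Fin (s+1) → Fin ((k:ℕ)+1) :=
  fun i => ⟨min (f i.castSucc : ℕ) (k : ℕ), Nat.lt_succ_of_le (min_le_right _ _)⟩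

lemma chainW_succ (n top : ℕ) (x e : ℂ) :
    chainW (n+1) top x e
      = ∑ k ∈ Finset.range (top+1),
          e^(k*(k+1)) * x^(2*k) * qbinom top k e * chainW n k x e := by
  classical
  unfold chainW
  rw [← Finset.sum_fiberwise (f := fun f => ∏ i : Fin (n+1),
      e ^ ((f i.castSucc : ℕ) * ((f i.castSucc : ℕ) + 1)) * x ^ (2 * (f i.castSucc : ℕ)) *
        qbinom (f i.succ : ℕ) (f i.castSucc : ℕ) e)
    (g := fun f : Fin (n+1+1) → Fin (top+1) => f (Fin.castSucc (Fin.last n)))]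
  rw [Finset.sum_range (fun k => e^(k*(k+1)) * x^(2*k) * qbinom top k e
      * (∑ f ∈ Finset.univ.filter
        (fun f : Fin (n + 1) → Fin (k + 1) => Monotone f ∧ f (Fin.last n) = Fin.last k),
        ∏ i : Fin n,
          e ^ ((f i.castSucc : ℕ) * ((f i.castSucc : ℕ) + 1)) * x ^ (2 * (f i.castSucc : ℕ)) *
            qbinom (f i.succ : ℕ) (f i.castSucc : ℕ) e))]
  apply Finset.sum_congr rfl
  intro k _
  rw [Finset.mul_sum]
  refine Finset.sum_nbij' (resF k) (liftF k) ?_ ?_ ?_ ?_ ?_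
  · -- resF maps fiber into G_k
    intro f hf
    simp only [Finset.mem_filter, Finset.mem_univ, true_and] at hf ⊢
    obtain ⟨⟨hmono, hlast⟩, hpos⟩ := hf
    constructor
    · intro a b hab
      simp only [resF, Fin.mk_le_mk]
      exact min_le_min (hmono (Fin.castSucc_le_castSucc_iff.mpr hab)) le_rfl
    · apply Fin.ext
      simp only [resF, hpos]
      simp
  · -- liftF maps G_k into fiber
    intro g hg
    simp only [Finset.mem_filter, Finset.mem_univ, true_and] at hg ⊢
    obtain ⟨hmono, hlast⟩ := hg
    refine ⟨⟨?_, ?_⟩, ?_⟩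
    · rw [Fin.monotone_iff_le_succ]
      intro i
      refine Fin.lastCases ?_ ?_ i
      · rw [Fin.succ_last]
        simp only [liftF, Fin.snoc_last]
        exact Fin.le_last _
      · intro j
        rw [Fin.succ_castSucc]
        simp only [liftF, Fin.snoc_castSucc]
        have h2 := hmono (Fin.castSucc_le_succ j)
        rw [Fin.le_def] at h2 ⊢
        simpa using h2
    · simp [liftF, Fin.snoc_last]
    · apply Fin.ext
      simp only [liftF, Fin.snoc_castSucc, hlast]
      simp
  · -- left inverse
    intro f hf
    simp only [Finset.mem_filter, Finset.mem_univ, true_and] at hf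
    obtain ⟨⟨hmono, hlast⟩, hpos⟩ := hf
    have hle : ∀ i : Fin (n+1), (f i.castSucc : ℕ) ≤ (k : ℕ) := by
      intro i
      have h1 : f i.castSucc ≤ f ((Fin.last n).castSucc) :=
        hmono (Fin.castSucc_le_castSucc_iff.mpr (Fin.le_last i))
      rw [hpos] at h1
      exact h1
    funext i
    refine Fin.lastCases ?_ ?_ i
    · simp [liftF, Fin.snoc_last, hlast]
    · intro j
      apply Fin.ext
      simp only [liftF, Fin.snoc_castSucc, resF]
      simpa using hle j
  · -- right inverse
    intro g hg
    funext i
    apply Fin.ext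
    simp only [resF, liftF, Fin.snoc_castSucc]
    simpa using Nat.lt_succ_iff.mp (g i).isLt
  · -- values
    intro f hf
    simp only [Finset.mem_filter, Finset.mem_univ, true_and] at hf
    obtain ⟨⟨hmono, hlast⟩, hpos⟩ := hf
    have hle : ∀ i : Fin (n+1), (f i.castSucc : ℕ) ≤ (k : ℕ) := by
      intro i
      have h1 : f i.castSucc ≤ f ((Fin.last n).castSucc) :=
        hmono (Fin.castSucc_le_castSucc_iff.mpr (Fin.le_last i))
      rw [hpos] at h1
      exact h1
    rw [Fin.prod_univ_castSucc]
    have hT : (f ((Fin.last n).succ) : ℕ) = top := by rw [Fin.succ_last, hlast]; rfl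
    have hK : (f ((Fin.last n).castSucc) : ℕ) = (k : ℕ) := by rw [hpos]
    have hres : ∀ i : Fin n,
        ((resF k f) i.castSucc : ℕ) = (f i.castSucc.castSucc : ℕ) := by
      intro i
      simp only [resF]
      exact min_eq_left (hle i.castSucc)
    have hres' : ∀ i : Fin n,
        ((resF k f) i.succ : ℕ) = (f i.castSucc.succ : ℕ) := by
      intro i
      simp only [resF, Fin.succ_castSucc]
      exact min_eq_left (hle i.succ)
    rw [hT, hK]
    have hprod : (∏ i : Fin n,
        e ^ (((resF k f) i.castSucc : ℕ) * (((resF k f) i.castSucc : ℕ) + 1)) *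
          x ^ (2 * ((resF k f) i.castSucc : ℕ)) *
            qbinom ((resF k f) i.succ : ℕ) ((resF k f) i.castSucc : ℕ) e)
        = ∏ i : Fin n,
        e ^ ((f i.castSucc.castSucc : ℕ) * ((f i.castSucc.castSucc : ℕ) + 1)) *
          x ^ (2 * (f i.castSucc.castSucc : ℕ)) *
            qbinom (f i.castSucc.succ : ℕ) (f i.castSucc.castSucc : ℕ) e :=
      Finset.prod_congr rfl (fun i _ => by rw [hres i, hres' i])
    rw [← hprod]
    ring

lemma key_induction (p : ℕ) (hp : 1 ≤ p) (e : ℂ) (he : IsPrimitiveRoot e p) (x : ℂ) :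
    ∀ s m, m ≤ p - 1 →
      (1 - x^(2*p)) * chainW s (p+m) x e = (1 - x^(2*(s+1)*p)) * chainW s m x e := by
  have hep : e ^ p = 1 := he.pow_eq_one
  intro s
  induction s with
  | zero =>
    intro m hm
    rw [chainW_zero, chainW_zero]
  | succ s ih =>
    intro m hm
    rw [chainW_succ, chainW_succ]
    have hluc := qbinom_lucas hp he m (by omega)
    -- rewrite the (p+m)-sum using Lucas and split
    have hsplit :
        (∑ k ∈ Finset.range (p+m+1),
            e^(k*(k+1)) * x^(2*k) * qbinom (p+m) k e * chainW s k x e)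
          = (∑ k ∈ Finset.range (m+1),
              e^(k*(k+1)) * x^(2*k) * qbinom m k e * chainW s k x e)
            + x^(2*p) * ∑ b ∈ Finset.range (m+1),
                e^(b*(b+1)) * x^(2*b) * qbinom m b e * chainW s (p+b) x e := by
      have step1 : ∀ k, e^(k*(k+1)) * x^(2*k) * qbinom (p+m) k e * chainW s k x e
          = e^(k*(k+1)) * x^(2*k) * qbinom m k e * chainW s k x e
            + e^(k*(k+1)) * x^(2*k) * (if p ≤ k then qbinom m (k-p) e else 0)
                * chainW s k x e := by
        intro k
        rw [hluc k]
        ring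
      rw [Finset.sum_congr rfl (fun k _ => step1 k), Finset.sum_add_distrib]
      congr 1
      · -- truncate first sum to range (m+1)
        symm
        apply Finset.sum_subset
        · intro a ha
          simp only [Finset.mem_range] at ha ⊢
          omega
        · intro a _ ha
          simp only [Finset.mem_range, not_lt] at ha
          rw [qbinom_eq_zero_of_lt (by omega) e]
          ring
      · -- reindex second sum
        have hsz : p + m + 1 = p + (m+1) := by omega
        rw [hsz, Finset.sum_range_add]
        have hz : (∑ k ∈ Finset.range p,
            e^(k*(k+1)) * x^(2*k) * (if p ≤ k then qbinom m (k-p) e else 0)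
              * chainW s k x e) = 0 := by
          apply Finset.sum_eq_zero
          intro k hk
          simp only [Finset.mem_range] at hk
          rw [if_neg (by omega)]
          ring
        rw [hz, zero_add, Finset.mul_sum]
        apply Finset.sum_congr rfl
        intro b _
        rw [if_pos (by omega)]
        have h1 : p + b - p = b := by omega
        have h2 : (p+b)*((p+b)+1) = b*(b+1) + p*(p+2*b+1) := by ring
        have h3 : 2*(p+b) = 2*b + 2*p := by ring
        have h4 : e^(p*(p+2*b+1)) = 1 := by rw [pow_mul, hep, one_pow]
        rw [h1, h2, h3, pow_add, pow_add, h4]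
        ring
    rw [hsplit]
    have hT : (1 - x^(2*p)) * (∑ b ∈ Finset.range (m+1),
          e^(b*(b+1)) * x^(2*b) * qbinom m b e * chainW s (p+b) x e)
        = (1 - x^(2*(s+1)*p)) * ∑ b ∈ Finset.range (m+1),
            e^(b*(b+1)) * x^(2*b) * qbinom m b e * chainW s b x e := by
      rw [Finset.mul_sum, Finset.mul_sum]
      apply Finset.sum_congr rfl
      intro b hb
      have hb' : b ≤ p - 1 := by
        simp only [Finset.mem_range] at hb
        omega
      have := ih b hb'
      linear_combination (e^(b*(b+1)) * x^(2*b) * qbinom m b e) * this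
    linear_combination (1 - x^(2*p)) * hsplit - hsplit * (1 - x^(2*p))
      + x^(2*p) * hT

theorem stmt8 (p : ℕ) (hp : 1 ≤ p) (e : ℂ) (he : IsPrimitiveRoot e p)
    (t : ℕ) (ht : 1 ≤ t) (m : ℕ) (hm : m ≤ p - 1) (x : ℂ) :
    (1 - x ^ (2 * p)) * chainW (t - 1) (p + m) x e =
      (1 - x ^ (2 * t * p)) * chainW (t - 1) m x e := by
  obtain ⟨s, rfl⟩ : ∃ s, t = s + 1 := ⟨t - 1, by omega⟩
  have h := key_induction p hp e he x s m hm
  simpa [Nat.add_sub_cancel, mul_assoc] using h
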